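/- Let B ∈ ℝ^{r×n} and let S ⊆ ℝⁿ be a linear subspace. Then Δ_S m(B) = q(B)(S \ {0}), i.e. the set of differences {κ ∗ x^B − κ ∗ y^B : κ ∈ ℝʳ_{>0}, x, y ∈ ℝⁿ_{>0}, x − y ∈ S \ {0}} equals {M z : M ∈ q(B), z ∈ S \ {0}}. -/

import Mathlib

/-- The positive orthant `ℝⁿ_{>0}`. -/
def posOrth (n : ℕ) : Set (Fin n → ℝ) := {x | ∀ i, 0 < x i}

/-- The generalized monomial map `μ_B : x ↦ x^B`, `(x^B)_j = ∏ᵢ xᵢ^{B j i}`. -/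
noncomputable def monMap {n r : ℕ} (B : Matrix (Fin r) (Fin n) ℝ) (x : Fin n → ℝ) :
    Fin r → ℝ :=
  fun j => ∏ i, x i ^ B j i

/-- `m(B) = {x ↦ κ ∗ x^B : κ ∈ ℝʳ_{>0}}`. -/
noncomputable def mSet {n r : ℕ} (B : Matrix (Fin r) (Fin n) ℝ) :
    Set ((Fin n → ℝ) → (Fin r → ℝ)) :=
  {G | ∃ κ : Fin r → ℝ, (∀ j, 0 < κ j) ∧ G = fun x => fun j => κ j * monMap B x j}

/-- `q(B) = {diag(κ) B diag(λ) : κ ∈ ℝʳ_{>0}, λ ∈ ℝⁿ_{>0}}`. -/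
def qSet {n r : ℕ} (B : Matrix (Fin r) (Fin n) ℝ) : Set (Matrix (Fin r) (Fin n) ℝ) :=
  {M | ∃ κ : Fin r → ℝ, ∃ lam : Fin n → ℝ, (∀ j, 0 < κ j) ∧ (∀ i, 0 < lam i) ∧
    M = Matrix.diagonal κ * B * Matrix.diagonal lam}

/-- `Δ_S 𝒢` for maps on the positive orthant. -/
def DeltaS {n r : ℕ} (X : Set (Fin n → ℝ)) (S : Submodule ℝ (Fin n → ℝ))
    (𝒢 : Set ((Fin n → ℝ) → (Fin r → ℝ))) : Set (Fin r → ℝ) :=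
  {w | ∃ G ∈ 𝒢, ∃ x ∈ X, ∃ y ∈ X, x - y ∈ S ∧ x - y ≠ 0 ∧ w = G x - G y}

/-- `ℬ(T) = {M z : M ∈ ℬ, z ∈ T}`. -/
def matImage {n r : ℕ} (ℬ : Set (Matrix (Fin r) (Fin n) ℝ)) (T : Set (Fin n → ℝ)) :
    Set (Fin r → ℝ) :=
  {w | ∃ M ∈ ℬ, ∃ z ∈ T, w = M.mulVec z}

lemma monMap_eq_exp_aux {n r : ℕ} (B : Matrix (Fin r) (Fin n) ℝ) {x : Fin n → ℝ}
    (hx : ∀ i, 0 < x i) (j : Fin r) :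
    monMap B x j = Real.exp (∑ i, B j i * Real.log (x i)) := by
  rw [Real.exp_sum, monMap]
  refine Finset.prod_congr rfl fun i _ => ?_
  rw [Real.rpow_def_of_pos (hx i), mul_comm]

lemma ratio_pos_aux {s : ℝ} (hs : s ≠ 0) : 0 < (Real.exp s - 1) / s := by
  rcases hs.lt_or_gt with h | h
  · exact div_pos_of_neg_of_neg (sub_neg.mpr (Real.exp_lt_one_iff.mpr h)) h
  · exact div_pos (sub_pos.mpr (Real.one_lt_exp_iff.mpr h)) h

lemma diff_eq_aux {n r : ℕ} (B : Matrix (Fin r) (Fin n) ℝ) {x y : Fin n → ℝ}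
    (hx : ∀ i, 0 < x i) (hy : ∀ i, 0 < y i) (j : Fin r) :
    monMap B x j - monMap B y j =
      Real.exp (∑ i, B j i * Real.log (y i)) *
        (Real.exp (∑ i, B j i * (Real.log (x i) - Real.log (y i))) - 1) := by
  rw [monMap_eq_exp_aux B hx j, monMap_eq_exp_aux B hy j, mul_sub, mul_one, ← Real.exp_add]
  congr 2
  rw [← Finset.sum_add_distrib]
  exact Finset.sum_congr rfl fun i _ => by ring

lemma mulVec_entry_aux {n r : ℕ} (B : Matrix (Fin r) (Fin n) ℝ) (κ : Fin r → ℝ)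
    (lam : Fin n → ℝ) (z : Fin n → ℝ) (j : Fin r) :
    (Matrix.diagonal κ * B * Matrix.diagonal lam).mulVec z j =
      κ j * ∑ i, B j i * (lam i * z i) := by
  simp only [Matrix.mulVec, dotProduct, Matrix.mul_diagonal, Matrix.diagonal_mul,
    Finset.mul_sum]
  exact Finset.sum_congr rfl fun i _ => by ring

/-- `Δ_S m(B) = q(B)(S \ {0})`. -/
theorem stmt12 {n r : ℕ} (B : Matrix (Fin r) (Fin n) ℝ) (S : Submodule ℝ (Fin n → ℝ)) :
    DeltaS (posOrth n) S (mSet B) = matImage (qSet B) ((S : Set (Fin n → ℝ)) \ {0}) := by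
  ext w
  constructor
  · rintro ⟨G, ⟨κ, hκ, rfl⟩, x, hx, y, hy, hS, hne, rfl⟩
    have hx : ∀ i, 0 < x i := hx
    have hy : ∀ i, 0 < y i := hy
    set z : Fin n → ℝ := x - y with hzdef
    have hzi : ∀ i, z i = x i - y i := fun i => rfl
    set u : Fin n → ℝ := fun i => Real.log (x i) - Real.log (y i) with hu
    set lam : Fin n → ℝ := fun i => if z i = 0 then 1 else u i / z i with hlam
    have hlampos : ∀ i, 0 < lam i := by
      intro i
      by_cases h : z i = 0
      · simp [hlam, h]
      · simp only [hlam, h, if_false]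
        rcases lt_or_gt_of_ne h with hneg | hpos
        · have hxy : x i < y i := by have := hzi i; linarith [hneg, this ▸ hneg]
          exact div_pos_of_neg_of_neg
            (sub_neg.mpr (Real.log_lt_log (hx i) hxy)) hneg
        · have hxy : y i < x i := by have := hzi i; linarith
          exact div_pos (sub_pos.mpr (Real.log_lt_log (hy i) hxy)) hpos
    have hlamz : ∀ i, lam i * z i = u i := by
      intro i
      by_cases h : z i = 0
      · have hxy : x i = y i := by have := hzi i; linarith [this ▸ h]
        simp [hlam, h, hu, hxy]
      · simp only [hlam, h, if_false]
        field_simp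
    set s : Fin r → ℝ := fun j => ∑ i, B j i * u i with hs
    set E : Fin r → ℝ := fun j => Real.exp (∑ i, B j i * Real.log (y i)) with hE
    have hEpos : ∀ j, 0 < E j := fun j => Real.exp_pos _
    set κ' : Fin r → ℝ := fun j =>
      if s j = 0 then κ j * E j else κ j * E j * ((Real.exp (s j) - 1) / s j) with hκ'
    have hκ'pos : ∀ j, 0 < κ' j := by
      intro j
      by_cases h : s j = 0
      · simp only [hκ', h, if_true]
        exact mul_pos (hκ j) (hEpos j)
      · simp only [hκ', h, if_false]
        exact mul_pos (mul_pos (hκ j) (hEpos j)) (ratio_pos_aux h)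
    refine ⟨Matrix.diagonal κ' * B * Matrix.diagonal lam,
      ⟨κ', lam, hκ'pos, hlampos, rfl⟩, z, ⟨hS, by simpa using hne⟩, ?_⟩
    funext j
    have key : κ' j * s j = κ j * E j * (Real.exp (s j) - 1) := by
      by_cases h : s j = 0
      · simp [hκ', h]
      · simp only [hκ', h, if_false]
        field_simp
    calc (κ j * monMap B x j - κ j * monMap B y j : ℝ)
        = κ j * (monMap B x j - monMap B y j) := by ring
      _ = κ j * (E j * (Real.exp (s j) - 1)) := by rw [diff_eq_aux B hx hy j]
      _ = κ' j * s j := by rw [key]; ring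
      _ = κ' j * ∑ i, B j i * (lam i * z i) := by
          congr 1
          exact (Finset.sum_congr rfl fun i _ => by rw [hlamz i]).symm
      _ = (Matrix.diagonal κ' * B * Matrix.diagonal lam).mulVec z j := by
          rw [mulVec_entry_aux]
  · rintro ⟨M, ⟨κ, lam, hκ, hlam, rfl⟩, z, ⟨hzS, hzne⟩, rfl⟩
    have hzne : z ≠ 0 := by simpa using hzne
    set u : Fin n → ℝ := fun i => lam i * z i with hu
    set y : Fin n → ℝ := fun i =>
      if z i = 0 then 1 / lam i else z i / (Real.exp (u i) - 1) with hy
    set x : Fin n → ℝ := fun i => y i * Real.exp (u i) with hx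
    have hupos : ∀ i, z i ≠ 0 → (Real.exp (u i) - 1) ≠ 0 := by
      intro i h
      have hune : u i ≠ 0 := mul_ne_zero (ne_of_gt (hlam i)) h
      refine sub_ne_zero.mpr fun hc => hune ?_
      exact Real.exp_eq_exp.mp (by rw [hc, Real.exp_zero])
    have hypos : ∀ i, 0 < y i := by
      intro i
      by_cases h : z i = 0
      · simp only [hy, h, if_true]
        exact div_pos one_pos (hlam i)
      · simp only [hy, h, if_false]
        rcases lt_or_gt_of_ne h with hneg | hpos
        · have : u i < 0 := mul_neg_of_pos_of_neg (hlam i) hneg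
          exact div_pos_of_neg_of_neg hneg (sub_neg.mpr (Real.exp_lt_one_iff.mpr this))
        · have : 0 < u i := mul_pos (hlam i) hpos
          exact div_pos hpos (sub_pos.mpr (Real.one_lt_exp_iff.mpr this))
    have hxpos : ∀ i, 0 < x i := fun i => mul_pos (hypos i) (Real.exp_pos _)
    have hxy : x - y = z := by
      funext i
      have : x i - y i = y i * (Real.exp (u i) - 1) := by simp [hx]; ring
      show x i - y i = z i
      rw [this]
      by_cases h : z i = 0
      · have hu0 : u i = 0 := by simp [hu, h]
        simp [hu0, h]
      · simp only [hy, h, if_false]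
        rw [div_mul_cancel₀ _ (hupos i h)]
    have hlogx : ∀ i, Real.log (x i) - Real.log (y i) = u i := by
      intro i
      rw [hx]
      show Real.log (y i * Real.exp (u i)) - Real.log (y i) = u i
      rw [Real.log_mul (ne_of_gt (hypos i)) (ne_of_gt (Real.exp_pos _)), Real.log_exp]
      ring
    set s : Fin r → ℝ := fun j => ∑ i, B j i * u i with hs
    set E : Fin r → ℝ := fun j => Real.exp (∑ i, B j i * Real.log (y i)) with hE
    have hEpos : ∀ j, 0 < E j := fun j => Real.exp_pos _
    set κ' : Fin r → ℝ := fun j =>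
      if s j = 0 then κ j / E j else κ j * (s j / (Real.exp (s j) - 1)) / E j with hκ'
    have hκ'pos : ∀ j, 0 < κ' j := by
      intro j
      by_cases h : s j = 0
      · simp only [hκ', h, if_true]
        exact div_pos (hκ j) (hEpos j)
      · simp only [hκ', h, if_false]
        have : 0 < s j / (Real.exp (s j) - 1) := by
          rw [← inv_div]
          exact inv_pos.mpr (ratio_pos_aux h)
        exact div_pos (mul_pos (hκ j) this) (hEpos j)
    refine ⟨fun x => fun j => κ' j * monMap B x j, ⟨κ', hκ'pos, rfl⟩,
      x, hxpos, y, hypos, by rw [hxy]; exact hzS, by rw [hxy]; exact hzne, ?_⟩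
    funext j
    have hdiff : monMap B x j - monMap B y j = E j * (Real.exp (s j) - 1) := by
      rw [diff_eq_aux B hxpos hypos j]
      simp only [hlogx]
      rfl
    have key : κ' j * (E j * (Real.exp (s j) - 1)) = κ j * s j := by
      by_cases h : s j = 0
      · simp [h]
      · have hne1 : (Real.exp (s j) - 1) ≠ 0 :=
          sub_ne_zero.mpr fun hc => h (Real.exp_eq_exp.mp (by rw [hc, Real.exp_zero]))
        have hE0 : E j ≠ 0 := ne_of_gt (hEpos j)
        simp only [hκ', h, if_false]
        rw [div_mul_eq_mul_div, div_eq_iff hE0]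
        field_simp
    calc (Matrix.diagonal κ * B * Matrix.diagonal lam).mulVec z j
        = κ j * ∑ i, B j i * (lam i * z i) := mulVec_entry_aux B κ lam z j
      _ = κ j * s j := rfl
      _ = κ' j * (E j * (Real.exp (s j) - 1)) := key.symm
      _ = κ' j * monMap B x j - κ' j * monMap B y j := by rw [← hdiff]; ring
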